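/- Let n ≥ 3 and let G be a finite subgroup of O(n) such that the orbit space S^{n−1}/G, equipped with the quotient topology, is simply connected. Then G is generated by the union of the stabilizer subgroups G_v = {g ∈ G : gv = v} over all points v ∈ S^{n−1}. -/

import Mathlib

open Metric

noncomputable section

/-- Euclidean `n`-space. -/
abbrev Euc (n : ℕ) := EuclideanSpace ℝ (Fin n)

/-- The orthogonal group `O(n)`, realized as the group of linear isometric
self-equivalences of Euclidean `n`-space. -/
abbrev Orth (n : ℕ) := Euc n ≃ₗᵢ[ℝ] Euc n

instance {n : ℕ} : MulAction (Orth n) (Euc n) where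
  smul g x := g x
  one_smul _ := rfl
  mul_smul _ _ _ := rfl

instance {n : ℕ} : MulAction (Orth n) (sphere (0 : Euc n) 1) where
  smul g x := ⟨g x, by
    have hx := x.2
    simp only [mem_sphere_iff_norm, sub_zero] at hx ⊢
    rw [g.norm_map]; exact hx⟩
  one_smul x := Subtype.ext rfl
  mul_smul _ _ _ := Subtype.ext rfl

/-- The fixed-point subspace `{v : gv = v}` of an orthogonal transformation. -/
def fixedSubspace {n : ℕ} (g : Orth n) : Submodule ℝ (Euc n) :=
  LinearMap.ker ((g.toLinearEquiv : Euc n →ₗ[ℝ] Euc n) - LinearMap.id)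

/-- A reflection: an orthogonal transformation whose fixed-point subspace has
dimension `n - 1` (codimension one). -/
def IsReflection {n : ℕ} (g : Orth n) : Prop :=
  Module.finrank ℝ (fixedSubspace g) + 1 = n

/-- A rotation: an orthogonal transformation whose fixed-point subspace has
dimension `n - 2` (codimension two). -/
def IsRotation {n : ℕ} (g : Orth n) : Prop :=
  Module.finrank ℝ (fixedSubspace g) + 2 = n

open Metric MulAction

section DistMin

variable {X : Type*} [MetricSpace X] {Γ : Type*} [Group Γ] [MulAction Γ X]

/-- Minimum distance from `x` to the partial orbit `T • x'`. -/
noncomputable def dT (T : Finset Γ) (h1 : (1 : Γ) ∈ T) (x x' : X) : ℝ :=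
  T.inf' ⟨1, h1⟩ fun γ => dist x (γ • x')

variable {T : Finset Γ} (h1 : (1 : Γ) ∈ T)

theorem dT_le {γ : Γ} (hγ : γ ∈ T) (x x' : X) : dT T h1 x x' ≤ dist x (γ • x') :=
  Finset.inf'_le _ hγ

theorem dT_exists (x x' : X) : ∃ γ ∈ T, dT T h1 x x' = dist x (γ • x') := by
  obtain ⟨γ, hγ, h⟩ := Finset.exists_mem_eq_inf' ⟨1, h1⟩ fun γ => dist x (γ • x')
  exact ⟨γ, hγ, h⟩

theorem dT_nonneg (x x' : X) : 0 ≤ dT T h1 x x' :=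
  Finset.le_inf' _ _ fun γ _ => dist_nonneg

theorem dT_self (x : X) : dT T h1 x x = 0 :=
  le_antisymm (by simpa using dT_le h1 h1 x x) (dT_nonneg h1 x x)

theorem dT_eq_zero {x x' : X} (h : dT T h1 x x' = 0) : ∃ γ ∈ T, γ • x' = x := by
  obtain ⟨γ, hγ, hEq⟩ := dT_exists h1 x x'
  exact ⟨γ, hγ, (dist_eq_zero.mp (hEq ▸ h)).symm⟩

variable (hiso : ∀ (γ : Γ) (x y : X), dist (γ • x) (γ • y) = dist x y)

include hiso

theorem dT_symm (hinv : ∀ γ ∈ T, γ⁻¹ ∈ T) (x x' : X) :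
    dT T h1 x x' = dT T h1 x' x := by
  have key : ∀ a b : X, dT T h1 a b ≤ dT T h1 b a := by
    intro a b
    obtain ⟨γ, hγ, hEq⟩ := dT_exists h1 b a
    have : dist a (γ⁻¹ • b) = dist b (γ • a) := by
      rw [← hiso γ a (γ⁻¹ • b), smul_inv_smul, dist_comm]
    calc dT T h1 a b ≤ dist a (γ⁻¹ • b) := dT_le h1 (hinv γ hγ) a b
      _ = dist b (γ • a) := this
      _ = dT T h1 b a := hEq.symm
  exact le_antisymm (key x x') (key x' x)

theorem dT_triangle (hmul : ∀ a ∈ T, ∀ b ∈ T, a * b ∈ T) (x x' x'' : X) :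
    dT T h1 x x'' ≤ dT T h1 x x' + dT T h1 x' x'' := by
  obtain ⟨γ₁, hγ₁, hE₁⟩ := dT_exists h1 x x'
  obtain ⟨γ₂, hγ₂, hE₂⟩ := dT_exists h1 x' x''
  calc dT T h1 x x'' ≤ dist x ((γ₁ * γ₂) • x'') := dT_le h1 (hmul _ hγ₁ _ hγ₂) x x''
    _ ≤ dist x (γ₁ • x') + dist (γ₁ • x') ((γ₁ * γ₂) • x'') := dist_triangle _ _ _
    _ = dist x (γ₁ • x') + dist x' (γ₂ • x'') := by
        rw [mul_smul, hiso γ₁ x' (γ₂ • x'')]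
    _ = dT T h1 x x' + dT T h1 x' x'' := by rw [hE₁, hE₂]

theorem dT_smul_left {γ : Γ} (hγ : γ ∈ T) (hmul : ∀ a ∈ T, ∀ b ∈ T, a * b ∈ T)
    (hinv : ∀ a ∈ T, a⁻¹ ∈ T) (x x' : X) : dT T h1 (γ • x) x' = dT T h1 x x' := by
  apply le_antisymm
  · obtain ⟨γ₀, hγ₀, hE⟩ := dT_exists h1 x x'
    calc dT T h1 (γ • x) x' ≤ dist (γ • x) ((γ * γ₀) • x') := dT_le h1 (hmul _ hγ _ hγ₀) _ _
      _ = dist x (γ₀ • x') := by rw [mul_smul, hiso]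
      _ = dT T h1 x x' := hE.symm
  · obtain ⟨γ₁, hγ₁, hE⟩ := dT_exists h1 (γ • x) x'
    calc dT T h1 x x' ≤ dist x ((γ⁻¹ * γ₁) • x') := dT_le h1 (hmul _ (hinv _ hγ) _ hγ₁) _ _
      _ = dist (γ • x) (γ₁ • x') := by
          rw [mul_smul, ← hiso γ x (γ⁻¹ • (γ₁ • x')), smul_inv_smul]
      _ = dT T h1 (γ • x) x' := hE.symm

theorem dT_smul_right {γ : Γ} (hγ : γ ∈ T) (hmul : ∀ a ∈ T, ∀ b ∈ T, a * b ∈ T)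
    (hinv : ∀ a ∈ T, a⁻¹ ∈ T) (x x' : X) : dT T h1 x (γ • x') = dT T h1 x x' := by
  apply le_antisymm
  · obtain ⟨γ₀, hγ₀, hE⟩ := dT_exists h1 x x'
    calc dT T h1 x (γ • x') ≤ dist x ((γ₀ * γ⁻¹) • γ • x') :=
          dT_le h1 (hmul _ hγ₀ _ (hinv _ hγ)) _ _
      _ = dist x (γ₀ • x') := by rw [smul_smul, inv_mul_cancel_right]
      _ = dT T h1 x x' := hE.symm
  · obtain ⟨γ₁, hγ₁, hE⟩ := dT_exists h1 x (γ • x')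
    calc dT T h1 x x' ≤ dist x ((γ₁ * γ) • x') := dT_le h1 (hmul _ hγ₁ _ hγ) _ _
      _ = dist x (γ₁ • γ • x') := by rw [mul_smul]
      _ = dT T h1 x (γ • x') := hE.symm

omit hiso

theorem dT_mono {T' : Finset Γ} (h1' : (1 : Γ) ∈ T') (hsub : T ⊆ T') (x x' : X) :
    dT T' h1' x x' ≤ dT T h1 x x' := by
  obtain ⟨γ, hγ, hE⟩ := dT_exists h1 x x'
  rw [hE]; exact dT_le h1' (hsub hγ) x x'

include hiso

omit hiso in
theorem continuous_finset_inf' {ι A : Type*} [TopologicalSpace A] {s : Finset ι} (hs : s.Nonempty)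
    {f : ι → A → ℝ} (hf : ∀ i, Continuous (f i)) :
    Continuous fun a => s.inf' hs fun i => f i a := by
  induction hs using Finset.Nonempty.cons_induction with
  | singleton i => simpa using hf i
  | cons i s hi hs ih =>
    have h2 := (hf i).min ih
    convert h2 using 1
    funext a
    rw [Finset.inf'_cons]

theorem dT_continuous : Continuous fun q : X × X => dT T h1 q.1 q.2 := by
  apply continuous_finset_inf' ⟨1, h1⟩
  intro γ
  have hsm : Continuous fun x : X => γ • x :=
    (Isometry.of_dist_eq fun a b => hiso γ a b).continuous
  exact continuous_fst.dist (hsm.comp continuous_snd)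

end DistMin

section Quot

variable {X : Type*} [MetricSpace X] {Γ : Type*} [Group Γ] [Finite Γ] [MulAction Γ X]

/-- The finset of elements of a subgroup of a finite group. -/
noncomputable def THset (H : Subgroup Γ) : Finset Γ :=
  Set.Finite.toFinset (Set.toFinite {γ : Γ | γ ∈ H})

theorem mem_THset {H : Subgroup Γ} {γ : Γ} : γ ∈ THset H ↔ γ ∈ H := by
  simp [THset]

theorem one_mem_THset (H : Subgroup Γ) : (1 : Γ) ∈ THset H :=
  mem_THset.mpr H.one_mem

theorem mul_mem_THset (H : Subgroup Γ) : ∀ a ∈ THset H, ∀ b ∈ THset H, a * b ∈ THset H :=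
  fun _ ha _ hb => mem_THset.mpr (H.mul_mem (mem_THset.mp ha) (mem_THset.mp hb))

theorem inv_mem_THset (H : Subgroup Γ) : ∀ a ∈ THset H, a⁻¹ ∈ THset H :=
  fun _ ha => mem_THset.mpr (H.inv_mem (mem_THset.mp ha))

/-- `H`-orbit distance between points of `X`. -/
noncomputable def dYf (H : Subgroup Γ) (x x' : X) : ℝ :=
  dT (THset H) (one_mem_THset H) x x'

theorem dYf_sound (hiso : ∀ (γ : Γ) (x y : X), dist (γ • x) (γ • y) = dist x y)
    (H : Subgroup Γ) (a₁ b₁ a₂ b₂ : X)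
    (h₁ : a₁ ∈ orbit H a₂) (h₂ : b₁ ∈ orbit H b₂) :
    dYf H a₁ b₁ = dYf H a₂ b₂ := by
  obtain ⟨g, hg⟩ := MulAction.mem_orbit_iff.mp h₁
  obtain ⟨g', hg'⟩ := MulAction.mem_orbit_iff.mp h₂
  have hg2 : (g : Γ) • a₂ = a₁ := hg
  have hg2' : (g' : Γ) • b₂ = b₁ := hg'
  rw [← hg2, ← hg2', dYf, dYf,
    dT_smul_left (one_mem_THset H) hiso (mem_THset.mpr g.2) (mul_mem_THset H) (inv_mem_THset H),
    dT_smul_right (one_mem_THset H) hiso (mem_THset.mpr g'.2) (mul_mem_THset H) (inv_mem_THset H)]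

/-- `H`-orbit distance on the quotient. -/
noncomputable def dYq (H : Subgroup Γ)
    (hiso : ∀ (γ : Γ) (x y : X), dist (γ • x) (γ • y) = dist x y) :
    Quotient (orbitRel H X) → Quotient (orbitRel H X) → ℝ :=
  Quotient.lift₂ (dYf H) fun a₁ b₁ a₂ b₂ h₁ h₂ =>
    dYf_sound hiso H a₁ b₁ a₂ b₂ (MulAction.orbitRel_apply.mp h₁) (MulAction.orbitRel_apply.mp h₂)

/-- Full-orbit distance on the quotient by the whole group. -/
noncomputable def dZq
    (hiso : ∀ (γ : Γ) (x y : X), dist (γ • x) (γ • y) = dist x y) :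
    Quotient (orbitRel Γ X) → Quotient (orbitRel Γ X) → ℝ :=
  Quotient.lift₂ (dYf (⊤ : Subgroup Γ)) fun a₁ b₁ a₂ b₂ h₁ h₂ => by
    obtain ⟨g, hg⟩ := MulAction.mem_orbit_iff.mp (MulAction.orbitRel_apply.mp h₁)
    obtain ⟨g', hg'⟩ := MulAction.mem_orbit_iff.mp (MulAction.orbitRel_apply.mp h₂)
    exact dYf_sound hiso ⊤ a₁ b₁ a₂ b₂
      (MulAction.mem_orbit_iff.mpr ⟨⟨g, trivial⟩, hg⟩)
      (MulAction.mem_orbit_iff.mpr ⟨⟨g', trivial⟩, hg'⟩)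

/-- Projection from the `H`-orbit quotient to the `Γ`-orbit quotient. -/
def pYZ (H : Subgroup Γ) : Quotient (orbitRel H X) → Quotient (orbitRel Γ X) :=
  Quotient.lift (fun x => Quotient.mk (orbitRel Γ X) x) fun a b h => by
    obtain ⟨g, hg⟩ := MulAction.mem_orbit_iff.mp (MulAction.orbitRel_apply.mp h)
    exact Quotient.sound (MulAction.orbitRel_apply.mpr (MulAction.mem_orbit_iff.mpr ⟨g, hg⟩))

variable (H : Subgroup Γ)
variable (hiso : ∀ (γ : Γ) (x y : X), dist (γ • x) (γ • y) = dist x y)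

theorem dYq_mk (x x' : X) :
    dYq H hiso (Quotient.mk _ x) (Quotient.mk _ x') = dYf H x x' := rfl

theorem dZq_mk (x x' : X) :
    dZq hiso (Quotient.mk (orbitRel Γ X) x) (Quotient.mk _ x') = dYf (⊤ : Subgroup Γ) x x' := rfl

theorem pYZ_mk (x : X) :
    pYZ H (Quotient.mk (orbitRel H X) x) = Quotient.mk (orbitRel Γ X) x := rfl

theorem dYq_self (y : Quotient (orbitRel H X)) : dYq H hiso y y = 0 := by
  induction y using Quotient.ind with | _ x =>
  exact dT_self (one_mem_THset H) x

theorem dZq_self (z : Quotient (orbitRel Γ X)) : dZq hiso z z = 0 := by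
  induction z using Quotient.ind with | _ x =>
  exact dT_self (one_mem_THset ⊤) x

theorem dYq_symm (y y' : Quotient (orbitRel H X)) :
    dYq H hiso y y' = dYq H hiso y' y := by
  induction y using Quotient.ind with | _ x =>
  induction y' using Quotient.ind with | _ x' =>
  exact dT_symm (one_mem_THset H) hiso (inv_mem_THset H) x x'

theorem dZq_symm (z z' : Quotient (orbitRel Γ X)) :
    dZq hiso z z' = dZq hiso z' z := by
  induction z using Quotient.ind with | _ x =>
  induction z' using Quotient.ind with | _ x' =>
  exact dT_symm (one_mem_THset ⊤) hiso (inv_mem_THset ⊤) x x'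

theorem dYq_triangle (a b c : Quotient (orbitRel H X)) :
    dYq H hiso a c ≤ dYq H hiso a b + dYq H hiso b c := by
  induction a using Quotient.ind with | _ x =>
  induction b using Quotient.ind with | _ x' =>
  induction c using Quotient.ind with | _ x'' =>
  exact dT_triangle (one_mem_THset H) hiso (mul_mem_THset H) x x' x''

theorem dZq_triangle (a b c : Quotient (orbitRel Γ X)) :
    dZq hiso a c ≤ dZq hiso a b + dZq hiso b c := by
  induction a using Quotient.ind with | _ x =>
  induction b using Quotient.ind with | _ x' =>
  induction c using Quotient.ind with | _ x'' =>
  exact dT_triangle (one_mem_THset ⊤) hiso (mul_mem_THset ⊤) x x' x''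

theorem dZq_p_le (y y' : Quotient (orbitRel H X)) :
    dZq hiso (pYZ H y) (pYZ H y') ≤ dYq H hiso y y' := by
  induction y using Quotient.ind with | _ x =>
  induction y' using Quotient.ind with | _ x' =>
  exact dT_mono (one_mem_THset H) (one_mem_THset ⊤) (fun γ hγ => mem_THset.mpr trivial) x x'

theorem lift_exists (y : Quotient (orbitRel H X)) (z : Quotient (orbitRel Γ X)) :
    ∃ y', pYZ H y' = z ∧ dYq H hiso y y' ≤ dZq hiso (pYZ H y) z := by
  induction y using Quotient.ind with | _ x =>
  induction z using Quotient.ind with | _ x' =>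
  obtain ⟨γ, hγ, hE⟩ := dT_exists (one_mem_THset (⊤ : Subgroup Γ)) x x'
  refine ⟨Quotient.mk _ (γ • x'), ?_, ?_⟩
  · exact Quotient.sound (MulAction.orbitRel_apply.mpr (MulAction.mem_orbit _ _))
  · rw [dYq_mk, pYZ_mk, dZq_mk]
    show dYf H x (γ • x') ≤ dT (THset ⊤) (one_mem_THset ⊤) x x'
    rw [hE]
    calc dYf H x (γ • x') ≤ dist x ((1 : Γ) • γ • x') := dT_le (one_mem_THset H) (one_mem_THset H) _ _
      _ = dist x (γ • x') := by rw [one_smul]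

theorem lift_unique {δ : ℝ}
    (hδ : ∀ γ : Γ, γ ∉ H → ∀ x : X, δ ≤ dYf H x (γ • x))
    (y y' : Quotient (orbitRel H X)) (hp : pYZ H y = pYZ H y')
    (hd : dYq H hiso y y' < δ) : y = y' := by
  induction y using Quotient.ind with | _ x =>
  induction y' using Quotient.ind with | _ x' =>
  obtain ⟨γ, hγ⟩ := MulAction.mem_orbit_iff.mp (MulAction.orbitRel_apply.mp (Quotient.exact hp))
  by_cases hγH : γ ∈ H
  · exact Quotient.sound (MulAction.orbitRel_apply.mpr
      (MulAction.mem_orbit_iff.mpr ⟨⟨γ, hγH⟩, hγ⟩))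
  · exfalso
    have h1 : dYq H hiso (Quotient.mk _ x) (Quotient.mk (orbitRel H X) x') = dYf H x' (γ • x') := by
      rw [dYq_mk, ← hγ]
      exact dT_symm (one_mem_THset H) hiso (inv_mem_THset H) (γ • x') x'
    have := hδ γ hγH x'
    rw [h1] at hd
    linarith

theorem dZq_cont1 (z : Quotient (orbitRel Γ X)) : Continuous fun w => dZq hiso z w := by
  induction z using Quotient.ind with | _ x =>
  have hsound : ∀ a b : X, orbitRel Γ X a b → dYf (⊤ : Subgroup Γ) x a = dYf (⊤ : Subgroup Γ) x b := by
    intro a b h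
    obtain ⟨g, hg⟩ := MulAction.mem_orbit_iff.mp (MulAction.orbitRel_apply.mp h)
    exact dYf_sound hiso ⊤ x a x b (MulAction.mem_orbit_iff.mpr ⟨1, one_smul _ _⟩)
      (MulAction.mem_orbit_iff.mpr ⟨⟨g, trivial⟩, hg⟩)
  have heq : (fun w => dZq hiso (Quotient.mk _ x) w)
      = Quotient.lift (fun x' => dYf (⊤ : Subgroup Γ) x x') hsound := by
    funext w
    induction w using Quotient.ind with | _ x' => rfl
  rw [heq]
  apply Continuous.quotient_lift
  exact (dT_continuous (one_mem_THset (⊤ : Subgroup Γ)) hiso).comp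
    (continuous_const.prodMk continuous_id)

include hiso in
theorem dYf_continuous : Continuous fun q : X × X => dYf H q.1 q.2 :=
  dT_continuous (one_mem_THset H) hiso

end Quot

section Chain

variable {Y Z : Type*} (p : Y → Z) (d : Y → Y → ℝ) (r : ℝ) (z : ℕ → Z) (y₀ : Y)

open Classical

/-- Discrete chain lifting: lift a discrete path in `Z` through `p` step by step,
always choosing a lift within distance `r` of the previous point. -/
noncomputable def chain : ℕ → Y := fun k =>
  Nat.rec y₀ (fun k ih => if h : ∃ y', p y' = z (k + 1) ∧ d ih y' < r then h.choose else y₀) k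

theorem chain_zero : chain p d r z y₀ 0 = y₀ := rfl

theorem chain_succ (k : ℕ) : chain p d r z y₀ (k + 1) =
    (if h : ∃ y', p y' = z (k + 1) ∧ d (chain p d r z y₀ k) y' < r then h.choose else y₀) := rfl

variable {p d r z y₀}
variable (hex : ∀ (y : Y) (k : ℕ), p y = z k → ∃ y', p y' = z (k + 1) ∧ d y y' < r)
  (h0 : p y₀ = z 0)

include hex h0

theorem chain_proj : ∀ k, p (chain p d r z y₀ k) = z k := by
  intro k
  induction k with
  | zero => exact h0
  | succ k ih =>
    have hx := hex _ k ih
    rw [chain_succ, dif_pos hx]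
    exact hx.choose_spec.1

theorem chain_gap (k : ℕ) : d (chain p d r z y₀ k) (chain p d r z y₀ (k + 1)) < r := by
  have hx := hex _ k (chain_proj hex h0 k)
  rw [chain_succ, dif_pos hx]
  exact hx.choose_spec.2

theorem chain_rigid
    (hsymm : ∀ a b, d a b = d b a) (htri : ∀ a b c, d a c ≤ d a b + d b c)
    (hu : ∀ y₁ y₂, p y₁ = p y₂ → d y₁ y₂ < 2 * r → y₁ = y₂)
    (y : ℕ → Y) (hy0 : y 0 = y₀) (hyp : ∀ k, p (y k) = z k)
    (hyg : ∀ k, d (y k) (y (k + 1)) < r) : ∀ k, y k = chain p d r z y₀ k := by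
  intro k
  induction k with
  | zero => simpa [chain_zero] using hy0
  | succ k ih =>
    apply hu _ _ (by rw [hyp, chain_proj hex h0])
    have h1 := htri (y (k + 1)) (y k) (chain p d r z y₀ (k + 1))
    have h2 := chain_gap hex h0 k
    have h3 := hyg k
    have e1 : d (y (k + 1)) (y k) = d (y k) (y (k + 1)) := hsymm _ _
    have e2 : d (y k) (chain p d r z y₀ (k + 1)) = d (chain p d r z y₀ k) (chain p d r z y₀ (k + 1)) := by
      rw [ih]
    linarith

theorem chain_stable
    (hsymm : ∀ a b, d a b = d b a) (htri : ∀ a b c, d a c ≤ d a b + d b c)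
    (hself : ∀ a, d a a = 0)
    {z' : ℕ → Z} (hex' : ∀ (y : Y) (k : ℕ), p y = z' k → ∃ y', p y' = z' (k + 1) ∧ d y y' < r)
    (h0' : p y₀ = z' 0)
    (hex2 : ∀ (y : Y) (k : ℕ), p y = z k → ∃ yh, p yh = z' k ∧ d y yh < r)
    (hu : ∀ y₁ y₂, p y₁ = p y₂ → d y₁ y₂ < 4 * r → y₁ = y₂)
    (hr : 0 < r) :
    ∀ k, d (chain p d r z y₀ k) (chain p d r z' y₀ k) < r := by
  intro k
  induction k with
  | zero => rw [chain_zero, chain_zero, hself]; exact hr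
  | succ k ih =>
    obtain ⟨yh, hyhp, hyhd⟩ := hex2 _ (k + 1) (chain_proj hex h0 (k + 1))
    have hkey : yh = chain p d r z' y₀ (k + 1) := by
      apply hu _ _ (by rw [hyhp, chain_proj hex' h0' (k + 1)])
      have t1 := htri yh (chain p d r z y₀ (k + 1)) (chain p d r z' y₀ (k + 1))
      have t2 := htri (chain p d r z y₀ (k + 1)) (chain p d r z y₀ k) (chain p d r z' y₀ (k + 1))
      have t3 := htri (chain p d r z y₀ k) (chain p d r z' y₀ k) (chain p d r z' y₀ (k + 1))
      have g1 := chain_gap hex h0 k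
      have g2 := chain_gap hex' h0' k
      have e1 : d yh (chain p d r z y₀ (k + 1)) = d (chain p d r z y₀ (k + 1)) yh := hsymm _ _
      have e2 : d (chain p d r z y₀ (k + 1)) (chain p d r z y₀ k)
          = d (chain p d r z y₀ k) (chain p d r z y₀ (k + 1)) := hsymm _ _
      linarith
    rw [← hkey]
    exact hyhd

end Chain

section ContLemmas

theorem lebesgue_aux {A : Type*} [MetricSpace A] [CompactSpace A] (g : A → A → ℝ)
    (hg : Continuous fun q : A × A => g q.1 q.2) (hself : ∀ a, g a a = 0) {r : ℝ} (hr : 0 < r) :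
    ∃ ε > 0, ∀ a b, dist a b < ε → g a b < r := by
  set K := {q : A × A | r ≤ g q.1 q.2} with hK
  have hKcl : IsClosed K := isClosed_le continuous_const hg
  rcases K.eq_empty_or_nonempty with hemp | hne
  · refine ⟨1, one_pos, fun a b _ => ?_⟩
    by_contra h
    push_neg at h
    exact Set.eq_empty_iff_forall_notMem.mp hemp (a, b) h
  · obtain ⟨q₀, hq₀K, hq₀min⟩ := hKcl.isCompact.exists_isMinOn hne
      (continuous_fst.dist continuous_snd).continuousOn
    refine ⟨dist q₀.1 q₀.2, ?_, ?_⟩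
    · rcases eq_or_lt_of_le (dist_nonneg (x := q₀.1) (y := q₀.2)) with h | h
      · exfalso
        have : q₀.1 = q₀.2 := dist_eq_zero.mp h.symm
        have hr' : r ≤ g q₀.1 q₀.2 := hq₀K
        rw [this, hself] at hr'
        linarith
      · exact h
    · intro a b hab
      by_contra h
      push_neg at h
      have := hq₀min (show (a, b) ∈ K from h)
      simp only [] at this
      exact absurd this (not_le.mpr hab)

theorem cont_d_comp {A Z : Type*} [TopologicalSpace A] [TopologicalSpace Z] (d : Z → Z → ℝ)
    (hc1 : ∀ z, Continuous fun w => d z w)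
    (hsymm : ∀ a b, d a b = d b a) (htri : ∀ a b c, d a c ≤ d a b + d b c)
    (hself : ∀ a, d a a = 0)
    {u v : A → Z} (hu : Continuous u) (hv : Continuous v) :
    Continuous fun a => d (u a) (v a) := by
  rw [continuous_iff_continuousAt]
  intro a₀
  have hb : ∀ a, ‖d (u a) (v a) - d (u a₀) (v a₀)‖ ≤ d (u a₀) (u a) + d (v a₀) (v a) := by
    intro a
    have t1 := htri (u a) (u a₀) (v a)
    have t1' := htri (u a₀) (v a₀) (v a)
    have t2 := htri (u a₀) (u a) (v a₀)
    have t2' := htri (u a) (v a) (v a₀)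
    have e1 : d (u a) (u a₀) = d (u a₀) (u a) := hsymm _ _
    have e2 : d (v a) (v a₀) = d (v a₀) (v a) := hsymm _ _
    have e3 : d (v a₀) (v a) = d (v a) (v a₀) := hsymm _ _
    rw [Real.norm_eq_abs, abs_le]
    constructor <;> linarith
  have h1 : Filter.Tendsto (fun a => d (u a₀) (u a)) (nhds a₀) (nhds 0) := by
    have := ((hc1 (u a₀)).comp hu).tendsto a₀
    simp only [Function.comp] at this
    rwa [hself] at this
  have h2 : Filter.Tendsto (fun a => d (v a₀) (v a)) (nhds a₀) (nhds 0) := by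
    have := ((hc1 (v a₀)).comp hv).tendsto a₀
    simp only [Function.comp] at this
    rwa [hself] at this
  have hsum : Filter.Tendsto (fun a => d (u a₀) (u a) + d (v a₀) (v a)) (nhds a₀) (nhds 0) := by
    simpa using h1.add h2
  have hz := squeeze_zero_norm hb hsum
  have := hz.add_const (d (u a₀) (v a₀))
  simpa [ContinuousAt] using this

end ContLemmas

section KeyTheorem

open unitInterval

theorem armstrong_key {X : Type*} [MetricSpace X] [CompactSpace X] [PathConnectedSpace X]
    {Γ : Type*} [Group Γ] [Finite Γ] [MulAction Γ X]
    (hiso : ∀ (γ : Γ) (x y : X), dist (γ • x) (γ • y) = dist x y)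
    (hsc : SimplyConnectedSpace (Quotient (orbitRel Γ X)))
    (γ₀ : Γ) : γ₀ ∈ Subgroup.closure {γ : Γ | ∃ x : X, γ • x = x} := by
  classical
  set H := Subgroup.closure {γ : Γ | ∃ x : X, γ • x = x} with hHdef
  obtain ⟨x₀⟩ : Nonempty X := PathConnectedSpace.nonempty
  have hstab : ∀ (γ : Γ) (x : X), γ • x = x → γ ∈ H := fun γ x h =>
    Subgroup.subset_closure ⟨x, h⟩
  -- a uniform lower bound δ for displacements of elements not in H
  have hδ : ∃ δ > 0, ∀ γ : Γ, γ ∉ H → ∀ x : X, δ ≤ dYf H x (γ • x) := by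
    haveI : Fintype Γ := Fintype.ofFinite Γ
    have hpos : ∀ γ : Γ, γ ∉ H → ∃ δ, 0 < δ ∧ ∀ x : X, δ ≤ dYf H x (γ • x) := by
      intro γ hγ
      have hsm : Continuous fun x : X => γ • x :=
        (Isometry.of_dist_eq fun a b => hiso γ a b).continuous
      have hcont : Continuous fun x : X => dYf H x (γ • x) :=
        (dYf_continuous H hiso).comp (continuous_id.prodMk hsm)
      obtain ⟨xm, _, hxm⟩ := isCompact_univ.exists_isMinOn ⟨x₀, trivial⟩ hcont.continuousOn
      refine ⟨dYf H xm (γ • xm), ?_, fun x => hxm (Set.mem_univ x)⟩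
      rcases eq_or_lt_of_le (dT_nonneg (one_mem_THset H) xm (γ • xm)) with h0 | h0
      · exfalso
        obtain ⟨γ', hγ', hfixe⟩ := dT_eq_zero (one_mem_THset H) h0.symm
        have hfix2 : (γ' * γ) • xm = xm := by rw [mul_smul, hfixe]
        have hγγ : γ' * γ ∈ H := hstab _ _ hfix2
        have : γ ∈ H := by
          have := H.mul_mem (H.inv_mem (mem_THset.mp hγ')) hγγ
          simpa using this
        exact hγ this
      · exact h0
    set D : Γ → ℝ := fun γ => if hγ : γ ∈ H then 1 else (hpos γ hγ).choose with hD
    refine ⟨Finset.univ.inf' ⟨1, Finset.mem_univ 1⟩ D, ?_, ?_⟩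
    · refine (Finset.lt_inf'_iff _).mpr fun γ _ => ?_
      by_cases hγ : γ ∈ H
      · simp [hD, hγ]
      · simp only [hD, dif_neg hγ]
        exact (hpos γ hγ).choose_spec.1
    · intro γ hγ x
      have h1 : Finset.univ.inf' ⟨1, Finset.mem_univ 1⟩ D ≤ D γ :=
        Finset.inf'_le _ (Finset.mem_univ γ)
      have h2 : D γ ≤ dYf H x (γ • x) := by
        simp only [hD, dif_neg hγ]
        exact (hpos γ hγ).choose_spec.2 x
      linarith
  obtain ⟨δ, hδ0, hδle⟩ := hδ
  set r : ℝ := δ / 8 with hrdef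
  have hr0 : 0 < r := by positivity
  have hu : ∀ c : ℝ, c ≤ δ → ∀ y₁ y₂, (pYZ (X := X) H) y₁ = (pYZ (X := X) H) y₂ → (dYq H hiso) y₁ y₂ < c → y₁ = y₂ :=
    fun c hc y₁ y₂ hpe hd => lift_unique H hiso hδle y₁ y₂ hpe (lt_of_lt_of_le hd hc)
  -- the path and the loop downstairs
  let α : Path x₀ (γ₀ • x₀) := PathConnectedSpace.somePath x₀ (γ₀ • x₀)
  let mkZ : X → Quotient (orbitRel Γ X) := Quotient.mk _
  have hmkZcont : Continuous mkZ := continuous_quot_mk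
  have hloopEq : mkZ (γ₀ • x₀) = mkZ x₀ :=
    Quotient.sound (MulAction.orbitRel_apply.mpr (MulAction.mem_orbit _ _))
  let lp : Path (mkZ x₀) (mkZ x₀) :=
    { toFun := fun s => mkZ (α s)
      continuous_toFun := hmkZcont.comp α.continuous
      source' := by show mkZ (α 0) = mkZ x₀; rw [α.source]
      target' := by show mkZ (α 1) = mkZ x₀; rw [α.target]; exact hloopEq }
  haveI := hsc
  obtain ⟨F⟩ := SimplyConnectedSpace.paths_homotopic lp (Path.refl (mkZ x₀))
  -- moduli of continuity
  obtain ⟨ε₁, hε₁0, hε₁⟩ := lebesgue_aux (A := I × I) (fun a b => (dZq (X := X) hiso) (F a) (F b))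
    (cont_d_comp (dZq (X := X) hiso) (dZq_cont1 hiso) (dZq_symm hiso) (dZq_triangle hiso) (dZq_self hiso)
      (F.continuous.comp continuous_fst) (F.continuous.comp continuous_snd))
    (fun a => dZq_self hiso (F a)) hr0
  obtain ⟨ε₂, hε₂0, hε₂⟩ := lebesgue_aux (A := I) (fun s s' => dYf H (α s) (α s'))
    ((dYf_continuous H hiso).comp
      ((α.continuous.comp continuous_fst).prodMk (α.continuous.comp continuous_snd)))
    (fun s => dT_self (one_mem_THset H) (α s)) hr0
  obtain ⟨N, hN⟩ := exists_nat_gt (1 / min ε₁ ε₂)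
  have hminpos : 0 < min ε₁ ε₂ := lt_min hε₁0 hε₂0
  have hNpos : 0 < (N : ℝ) := lt_trans (by positivity) hN
  have hN1 : (1 : ℝ) / N < min ε₁ ε₂ := by
    rw [div_lt_iff₀ hNpos]
    have := (div_lt_iff₀ hminpos).mp hN
    nlinarith
  -- the grid
  let ι : ℕ → I := fun k =>
    ⟨min ((k : ℝ) / N) 1, Set.mem_Icc.mpr ⟨le_min (by positivity) zero_le_one, min_le_right _ _⟩⟩
  have hι0 : ι 0 = 0 := by
    apply Subtype.ext
    simp [ι]
  have hιN : ι N = 1 := by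
    apply Subtype.ext
    simp [ι, div_self (ne_of_gt hNpos)]
  have hιdist : ∀ k, dist (ι k) (ι (k + 1)) ≤ 1 / N := by
    intro k
    rw [Subtype.dist_eq, Real.dist_eq]
    have hcast : ((k + 1 : ℕ) : ℝ) / N = (k : ℝ) / N + 1 / N := by push_cast; ring
    have h1 : min ((k : ℝ) / N) 1 ≤ min (((k + 1 : ℕ) : ℝ) / N) 1 := by
      apply min_le_min _ le_rfl
      rw [hcast]
      have : (0:ℝ) ≤ 1 / N := by positivity
      linarith
    have h2 : min (((k + 1 : ℕ) : ℝ) / N) 1 ≤ min ((k : ℝ) / N) 1 + 1 / N := by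
      rw [hcast]
      rcases le_total ((k : ℝ) / N) 1 with h | h
      · calc min ((k : ℝ) / N + 1 / N) 1 ≤ (k : ℝ) / N + 1 / N := min_le_left _ _
          _ = min ((k : ℝ) / N) 1 + 1 / N := by rw [min_eq_left h]
      · have : (0:ℝ) ≤ 1 / N := by positivity
        calc min ((k : ℝ) / N + 1 / N) 1 ≤ 1 := min_le_right _ _
          _ ≤ min ((k : ℝ) / N) 1 + 1 / N := by rw [min_eq_right h]; linarith
    have : (0:ℝ) ≤ 1 / N := by positivity
    rw [abs_le]
    constructor <;> [skip; skip] <;> simp only [ι] <;> linarith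
  -- columns of the homotopy along the grid
  let zc : ℕ → ℕ → Quotient (orbitRel Γ X) := fun j k => F (ι j, ι k)
  have hcol0 : ∀ j, zc j 0 = mkZ x₀ := by
    intro j
    show F (ι j, ι 0) = mkZ x₀
    rw [hι0]
    exact F.source (ι j)
  have hcolN : ∀ j, zc j N = mkZ x₀ := by
    intro j
    show F (ι j, ι N) = mkZ x₀
    rw [hιN]
    exact F.target (ι j)
  have hcolL : ∀ k, zc 0 k = mkZ (α (ι k)) := by
    intro k
    show F (ι 0, ι k) = mkZ (α (ι k))
    rw [hι0]
    exact F.apply_zero (ι k)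
  have hcolR : ∀ k, zc N k = mkZ x₀ := by
    intro k
    show F (ι N, ι k) = mkZ x₀
    rw [hιN]
    rw [F.apply_one (ι k)]
    rfl
  -- grid pairs are close
  have hgapcol : ∀ j k, (dZq (X := X) hiso) (zc j k) (zc j (k + 1)) < r := by
    intro j k
    apply hε₁
    rw [Prod.dist_eq]
    apply lt_of_le_of_lt (max_le (by rw [dist_self]; positivity) (hιdist k))
    exact lt_of_lt_of_le hN1 (min_le_left _ _)
  have hgaprow : ∀ j k, (dZq (X := X) hiso) (zc j k) (zc (j + 1) k) < r := by
    intro j k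
    apply hε₁
    rw [Prod.dist_eq]
    apply lt_of_le_of_lt (max_le (hιdist j) (by rw [dist_self]; positivity))
    exact lt_of_lt_of_le hN1 (min_le_left _ _)
  -- chains up the columns
  have hex : ∀ j (y : Quotient (orbitRel H X)) (k : ℕ), (pYZ (X := X) H) y = zc j k →
      ∃ y', (pYZ (X := X) H) y' = zc j (k + 1) ∧ (dYq H hiso) y y' < r := by
    intro j y k hpe
    obtain ⟨y', h1, h2⟩ := lift_exists H hiso y (zc j (k + 1))
    exact ⟨y', h1, lt_of_le_of_lt h2 (by rw [hpe]; exact hgapcol j k)⟩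
  have hex2 : ∀ j (y : Quotient (orbitRel H X)) (k : ℕ), (pYZ (X := X) H) y = zc j k →
      ∃ yh, (pYZ (X := X) H) yh = zc (j + 1) k ∧ (dYq H hiso) y yh < r := by
    intro j y k hpe
    obtain ⟨y', h1, h2⟩ := lift_exists H hiso y (zc (j + 1) k)
    exact ⟨y', h1, lt_of_le_of_lt h2 (by rw [hpe]; exact hgaprow j k)⟩
  let y₀ : Quotient (orbitRel H X) := Quotient.mk _ x₀
  have hy₀ : ∀ j, (pYZ (X := X) H) y₀ = zc j 0 := fun j => by rw [hcol0 j]; rfl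
  let c : ℕ → ℕ → Quotient (orbitRel H X) := fun j => chain (pYZ (X := X) H) (dYq H hiso) r (zc j) y₀
  have hu1 : ∀ y₁ y₂, (pYZ (X := X) H) y₁ = (pYZ (X := X) H) y₂ → (dYq H hiso) y₁ y₂ < r → y₁ = y₂ :=
    fun y₁ y₂ a b => hu r (by rw [hrdef]; linarith) y₁ y₂ a b
  have hu2 : ∀ y₁ y₂, (pYZ (X := X) H) y₁ = (pYZ (X := X) H) y₂ → (dYq H hiso) y₁ y₂ < 2 * r → y₁ = y₂ :=
    fun y₁ y₂ a b => hu (2 * r) (by rw [hrdef]; linarith) y₁ y₂ a b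
  have hu4 : ∀ y₁ y₂, (pYZ (X := X) H) y₁ = (pYZ (X := X) H) y₂ → (dYq H hiso) y₁ y₂ < 4 * r → y₁ = y₂ :=
    fun y₁ y₂ a b => hu (4 * r) (by rw [hrdef]; linarith) y₁ y₂ a b
  -- adjacent columns stay close
  have hstb : ∀ j k, (dYq H hiso) (c j k) (c (j + 1) k) < r := by
    intro j
    exact chain_stable (hex j) (hy₀ j) (dYq_symm H hiso) (dYq_triangle H hiso)
      (dYq_self H hiso) (hex (j + 1)) (hy₀ (j + 1)) (hex2 j) hu4 hr0
  -- all top endpoints agree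
  have hend : ∀ j, c j N = c (j + 1) N := by
    intro j
    apply hu1
    · rw [chain_proj (hex j) (hy₀ j) N, chain_proj (hex (j + 1)) (hy₀ (j + 1)) N,
        hcolN, hcolN]
    · exact hstb j N
  have hendall : ∀ m, c 0 N = c m N := by
    intro m
    induction m with
    | zero => rfl
    | succ m ih => rw [ih, hend m]
  -- the right column is constant
  have hcR : ∀ k, y₀ = c N k := by
    apply chain_rigid (hex N) (hy₀ N) (dYq_symm H hiso) (dYq_triangle H hiso) hu2
      (fun _ => y₀) rfl
    · intro k
      rw [hcolR k]
      rfl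
    · intro k
      rw [dYq_self]
      exact hr0
  -- the left column is the lifted path
  have hcL : ∀ k, Quotient.mk (orbitRel H X) (α (ι k)) = c 0 k := by
    apply chain_rigid (hex 0) (hy₀ 0) (dYq_symm H hiso) (dYq_triangle H hiso) hu2
      (fun k => Quotient.mk _ (α (ι k)))
    · rw [hι0, α.source]
    · intro k
      rw [hcolL k]
      rfl
    · intro k
      have : (dYq H hiso) (Quotient.mk _ (α (ι k))) (Quotient.mk _ (α (ι (k + 1))))
          = dYf H (α (ι k)) (α (ι (k + 1))) := rfl
      rw [this]
      exact hε₂ _ _ (lt_of_le_of_lt (hιdist k) (lt_of_lt_of_le hN1 (min_le_right _ _)))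
  -- conclude
  have hfinal : Quotient.mk (orbitRel H X) (γ₀ • x₀) = y₀ := by
    have h1 : Quotient.mk (orbitRel H X) (α (ι N)) = y₀ := by
      rw [hcL N, hendall N, ← hcR N]
    rw [← h1, hιN, α.target]
  obtain ⟨h, hh⟩ := MulAction.mem_orbit_iff.mp
    (MulAction.orbitRel_apply.mp (Quotient.exact hfinal))
  have hh2 : (h : Γ) • x₀ = γ₀ • x₀ := hh
  have hfix : ((h : Γ)⁻¹ * γ₀) • x₀ = x₀ := by
    rw [mul_smul, ← hh2, inv_smul_smul]
  have hmem : (h : Γ)⁻¹ * γ₀ ∈ H := hstab _ _ hfix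
  have := H.mul_mem h.2 hmem
  simpa using this

end KeyTheorem

theorem stmt_4 (n : ℕ) (hn : 3 ≤ n) (G : Subgroup (Orth n)) [Finite G]
    (hsc : SimplyConnectedSpace (Quotient (MulAction.orbitRel G (sphere (0 : Euc n) 1)))) :
    Subgroup.closure (⋃ v : sphere (0 : Euc n) 1,
      {g : Orth n | g ∈ G ∧ g • (v : Euc n) = v}) = G := by
  haveI : NeZero n := ⟨by omega⟩
  -- path connectedness of the sphere
  haveI : PathConnectedSpace (sphere (0 : Euc n) 1) := by
    rw [← isPathConnected_iff_pathConnectedSpace]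
    apply isPathConnected_sphere _ _ zero_le_one
    have h1 : (Module.finrank ℝ (Euc n) : Cardinal) = Module.rank ℝ (Euc n) :=
      Module.finrank_eq_rank ℝ _
    rw [← h1, finrank_euclideanSpace_fin]
    exact_mod_cast (by omega : 1 < n)
  have hiso : ∀ (γ : G) (x y : sphere (0 : Euc n) 1), dist (γ • x) (γ • y) = dist x y := by
    intro γ x y
    rw [Subtype.dist_eq, Subtype.dist_eq]
    exact (γ : Orth n).dist_map _ _
  apply le_antisymm
  · apply Subgroup.closure_le G |>.mpr
    intro g hg
    obtain ⟨v, hv⟩ := Set.mem_iUnion.mp hg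
    exact hv.1
  · intro g hg
    have hk := armstrong_key (X := sphere (0 : Euc n) 1) (Γ := G) hiso hsc ⟨g, hg⟩
    have hsub : Subgroup.closure {γ : G | ∃ x : sphere (0 : Euc n) 1, γ • x = x} ≤
        (Subgroup.closure (⋃ v : sphere (0 : Euc n) 1,
          {g : Orth n | g ∈ G ∧ g • (v : Euc n) = v})).comap G.subtype := by
      apply (Subgroup.closure_le _).mpr
      intro γ hγ
      obtain ⟨v, hv⟩ := hγ
      exact Subgroup.subset_closure (Set.mem_iUnion.mpr ⟨v, γ.2, congrArg Subtype.val hv⟩)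
    exact hsub hk
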